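/- Let A, Ã ∈ S_{d,K}, y_i ∈ R^d with p_i := ‖(I − AAᵀ)y_i‖ > 0, E(M) := Σ_i ‖(I − MMᵀ)y_i‖, C_A := Σ_i y_iy_iᵀ/p_i, S_A := AᵀC_AA invertible, and Ã the polar factor of C_A A S_A^{−1}. Then E(Ã) − E(A) ≤ −Σ_{i=1}^N ‖ÃÃᵀy_i − AAᵀy_i‖² / (2 p_i). -/

import Mathlib

open Matrix

section
open scoped ComplexOrder

/-- The positive semidefinite square root of a positive semidefinite matrix
(removed from Mathlib; restored with its old definition). -/
noncomputable def Matrix.PosSemidef.sqrt {n 𝕜 : Type*} [Fintype n] [RCLike 𝕜] [DecidableEq n]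
    {A : Matrix n n 𝕜} (hA : Matrix.PosSemidef A) : Matrix n n 𝕜 :=
  hA.1.eigenvectorUnitary.1 * diagonal ((↑) ∘ (√·) ∘ hA.1.eigenvalues) *
  (star hA.1.eigenvectorUnitary : Matrix n n 𝕜)

end

/-- Euclidean norm of a vector. -/
noncomputable def evn {d : ℕ} (v : Fin d → ℝ) : ℝ := Real.sqrt (∑ i, (v i) ^ 2)


lemma evn_sq' {d : ℕ} (v : Fin d → ℝ) : evn v ^ 2 = v ⬝ᵥ v := by
  rw [evn, Real.sq_sqrt (Finset.sum_nonneg fun i _ => sq_nonneg _)]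
  simp [dotProduct, sq]

lemma evn_pos' {d : ℕ} {v : Fin d → ℝ} (hv : v ≠ 0) : 0 < evn v := by
  rw [evn]
  apply Real.sqrt_pos.2
  obtain ⟨j, hj⟩ := Function.ne_iff.1 hv
  exact Finset.sum_pos' (fun i _ => sq_nonneg _)
    ⟨j, Finset.mem_univ j, lt_of_le_of_ne (sq_nonneg _) (Ne.symm (pow_ne_zero 2 hj))⟩

lemma mulVec_dp {d : ℕ} (M : Matrix (Fin d) (Fin d) ℝ) (u v : Fin d → ℝ) :
    (M.mulVec u) ⬝ᵥ v = u ⬝ᵥ (Mᵀ.mulVec v) := by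
  rw [dotProduct_comm, dotProduct_mulVec, ← mulVec_transpose, dotProduct_comm, dotProduct_mulVec,
    ← mulVec_transpose, transpose_transpose, dotProduct_comm]

lemma trace_vv {d : ℕ} (M : Matrix (Fin d) (Fin d) ℝ) (u : Fin d → ℝ) :
    (M * vecMulVec u u).trace = u ⬝ᵥ M.mulVec u := by
  simp [trace, diag, mul_apply, vecMulVec_apply, dotProduct, mulVec, Finset.mul_sum]
  congr 1; ext j; congr 1; ext k; ring

lemma psd_sqrt_isHermitian {n : Type*} [Fintype n] [DecidableEq n] {M : Matrix n n ℝ}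
    (hA : M.PosSemidef) : hA.sqrt.IsHermitian := by
  unfold Matrix.PosSemidef.sqrt
  rw [star_eq_conjTranspose]
  exact isHermitian_mul_mul_conjTranspose _ (isHermitian_diagonal _)

lemma psd_sqrt_mul_self {n : Type*} [Fintype n] [DecidableEq n] {M : Matrix n n ℝ}
    (hA : M.PosSemidef) : hA.sqrt * hA.sqrt = M := by
  set U : Matrix n n ℝ := hA.1.eigenvectorUnitary.1 with hUdef
  have hU : (star hA.1.eigenvectorUnitary : Matrix n n ℝ) * U = 1 :=
    Unitary.star_mul_self_of_mem hA.1.eigenvectorUnitary.2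
  conv_rhs => rw [hA.1.spectral_theorem, Unitary.conjStarAlgAut_apply]
  unfold Matrix.PosSemidef.sqrt
  rw [← hUdef]
  calc U * diagonal ((↑) ∘ (√·) ∘ hA.1.eigenvalues) * (star hA.1.eigenvectorUnitary : Matrix n n ℝ)
        * (U * diagonal ((↑) ∘ (√·) ∘ hA.1.eigenvalues) * (star hA.1.eigenvectorUnitary : Matrix n n ℝ))
      = U * diagonal ((↑) ∘ (√·) ∘ hA.1.eigenvalues)
        * ((star hA.1.eigenvectorUnitary : Matrix n n ℝ) * U)
        * diagonal ((↑) ∘ (√·) ∘ hA.1.eigenvalues) * (star hA.1.eigenvectorUnitary : Matrix n n ℝ) := by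
        simp only [Matrix.mul_assoc]
    _ = U * (diagonal ((↑) ∘ (√·) ∘ hA.1.eigenvalues) * diagonal ((↑) ∘ (√·) ∘ hA.1.eigenvalues))
        * (star hA.1.eigenvectorUnitary : Matrix n n ℝ) := by
        rw [hU, Matrix.mul_one]; simp only [Matrix.mul_assoc]
    _ = _ := by
        rw [diagonal_mul_diagonal]
        congr 2
        ext i j
        simp only [diagonal_apply]
        split_ifs <;> simp [Real.mul_self_sqrt (hA.eigenvalues_nonneg i)]

/-- Sufficient decrease of the gradient-descent step of rotational invariant L1-norm PCA:
with `B` the polar factor of `C_A A S_A⁻¹`, one has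
`E(B) - E(A) ≤ -∑ i ‖B Bᵀ y_i - A Aᵀ y_i‖² / (2 ‖(I - A Aᵀ) y_i‖)`. -/
theorem stmt15 {d K N : ℕ} (A B : Matrix (Fin d) (Fin K) ℝ)
    (y : Fin N → Fin d → ℝ) (C S : Matrix (Fin d) (Fin d) ℝ) (SA : Matrix (Fin K) (Fin K) ℝ)
    (hA : Aᵀ * A = 1)
    (hy : ∀ i, y i - A.mulVec (Aᵀ.mulVec (y i)) ≠ 0)
    (hC : C = ∑ i, (evn (y i - A.mulVec (Aᵀ.mulVec (y i))))⁻¹ • vecMulVec (y i) (y i))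
    (hSA : SA = Aᵀ * C * A) (hSAinv : IsUnit SA)
    (hM : ((C * A * SA⁻¹)ᵀ * (C * A * SA⁻¹)).PosDef)
    (hB : B = C * A * SA⁻¹ * (hM.posSemidef.sqrt)⁻¹) :
    (∑ i, evn (y i - B.mulVec (Bᵀ.mulVec (y i)))) - (∑ i, evn (y i - A.mulVec (Aᵀ.mulVec (y i))))
      ≤ -∑ i, evn (B.mulVec (Bᵀ.mulVec (y i)) - A.mulVec (Aᵀ.mulVec (y i))) ^ 2
            / (2 * evn (y i - A.mulVec (Aᵀ.mulVec (y i)))) := by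
  classical
  -- abstract away the square root
  obtain ⟨H, hHsym, hHH, hBdef⟩ :
      ∃ H : Matrix (Fin K) (Fin K) ℝ, Hᵀ = H ∧
        H * H = (C * A * SA⁻¹)ᵀ * (C * A * SA⁻¹) ∧ B = C * A * SA⁻¹ * H⁻¹ := by
    refine ⟨hM.posSemidef.sqrt, ?_, psd_sqrt_mul_self hM.posSemidef, hB⟩
    rw [← conjTranspose_eq_transpose_of_trivial]
    exact psd_sqrt_isHermitian hM.posSemidef
  have hdetMM : (0:ℝ) < ((C * A * SA⁻¹)ᵀ * (C * A * SA⁻¹)).det := hM.det_pos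
  clear hB hM
  -- symmetry facts
  have hCsym : Cᵀ = C := by
    rw [hC, transpose_sum]
    refine Finset.sum_congr rfl fun i _ => ?_
    rw [transpose_smul]
    congr 1
    ext a b
    simp [vecMulVec_apply, transpose_apply, mul_comm]
  have hSAsym : SAᵀ = SA := by
    rw [hSA, transpose_mul, transpose_mul, transpose_transpose, hCsym, ← Matrix.mul_assoc]
  have hdSA : IsUnit SA.det := (isUnit_iff_isUnit_det _).1 hSAinv
  have hSA1 : SA * SA⁻¹ = 1 := mul_nonsing_inv _ hdSA
  have hSA1' : SA⁻¹ * SA = 1 := nonsing_inv_mul _ hdSA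
  have hSAinvsym : (SA⁻¹)ᵀ = SA⁻¹ := by rw [transpose_nonsing_inv, hSAsym]
  -- H is invertible
  have hdH : IsUnit H.det := by
    have h1 := hdetMM
    rw [← hHH, det_mul] at h1
    exact isUnit_iff_ne_zero.2 (fun h => by simp [h] at h1)
  have hH1 : H * H⁻¹ = 1 := mul_nonsing_inv _ hdH
  have hH1' : H⁻¹ * H = 1 := nonsing_inv_mul _ hdH
  have hHinvsym : (H⁻¹)ᵀ = H⁻¹ := by rw [transpose_nonsing_inv, hHsym]
  -- key products
  have hAM : Aᵀ * (C * A * SA⁻¹) = 1 := by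
    calc Aᵀ * (C * A * SA⁻¹) = (Aᵀ * C * A) * SA⁻¹ := by simp only [Matrix.mul_assoc]
    _ = 1 := by rw [← hSA, hSA1]
  have hAB : Aᵀ * B = H⁻¹ := by
    rw [hBdef]
    calc Aᵀ * (C * A * SA⁻¹ * H⁻¹) = (Aᵀ * (C * A * SA⁻¹)) * H⁻¹ := by
          simp only [Matrix.mul_assoc]
    _ = H⁻¹ := by rw [hAM, one_mul]
  have hBtA : Bᵀ * A = H⁻¹ := by
    have := congrArg transpose hAB
    rwa [transpose_mul, transpose_transpose, hHinvsym] at this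
  have hMt : (C * A * SA⁻¹)ᵀ = SA⁻¹ * (Aᵀ * C) := by
    rw [transpose_mul, transpose_mul, hCsym, hSAinvsym]
  have hBtB : Bᵀ * B = 1 := by
    rw [hBdef, transpose_mul, hHinvsym]
    calc H⁻¹ * (C * A * SA⁻¹)ᵀ * (C * A * SA⁻¹ * H⁻¹)
        = H⁻¹ * ((C * A * SA⁻¹)ᵀ * (C * A * SA⁻¹)) * H⁻¹ := by simp only [Matrix.mul_assoc]
    _ = H⁻¹ * (H * H) * H⁻¹ := by rw [hHH]
    _ = (H⁻¹ * H) * (H * H⁻¹) := by simp only [Matrix.mul_assoc]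
    _ = 1 := by rw [hH1, hH1', one_mul]
  have hACB : Aᵀ * C * B = SA * H := by
    have hAC : Aᵀ * C = SA * (C * A * SA⁻¹)ᵀ := by
      rw [hMt, ← Matrix.mul_assoc, hSA1, Matrix.one_mul]
    rw [hBdef]
    calc Aᵀ * C * (C * A * SA⁻¹ * H⁻¹)
        = (Aᵀ * C) * (C * A * SA⁻¹) * H⁻¹ := by simp only [Matrix.mul_assoc]
    _ = SA * ((C * A * SA⁻¹)ᵀ * (C * A * SA⁻¹)) * H⁻¹ := by rw [hAC]; simp only [Matrix.mul_assoc]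
    _ = SA * (H * H) * H⁻¹ := by rw [hHH]
    _ = SA * H * (H * H⁻¹) := by simp only [Matrix.mul_assoc]
    _ = SA * H := by rw [hH1, mul_one]
  simp only [Matrix.mulVec_mulVec] at hC hy ⊢
  -- projection matrices
  set P : Matrix (Fin d) (Fin d) ℝ := A * Aᵀ with hPdef
  set Q : Matrix (Fin d) (Fin d) ℝ := B * Bᵀ with hQdef
  have hPsym : Pᵀ = P := by rw [hPdef, transpose_mul, transpose_transpose]
  have hQsym : Qᵀ = Q := by rw [hQdef, transpose_mul, transpose_transpose]
  have hPP : P * P = P := by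
    rw [hPdef]
    calc A * Aᵀ * (A * Aᵀ) = A * (Aᵀ * A) * Aᵀ := by simp only [Matrix.mul_assoc]
    _ = A * Aᵀ := by rw [hA, Matrix.mul_one]
  have hQQ : Q * Q = Q := by
    rw [hQdef]
    calc B * Bᵀ * (B * Bᵀ) = B * (Bᵀ * B) * Bᵀ := by simp only [Matrix.mul_assoc]
    _ = B * Bᵀ := by rw [hBtB, Matrix.mul_one]
  -- scalar abbreviations
  set p : Fin N → ℝ := fun i => evn (y i - P.mulVec (y i)) with hp
  have hppos : ∀ i, 0 < p i := fun i => evn_pos' (hy i)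
  -- dot product identities
  have dqq : ∀ (u : Fin d → ℝ), (Q.mulVec u) ⬝ᵥ (Q.mulVec u) = u ⬝ᵥ Q.mulVec u := by
    intro u
    rw [mulVec_dp, hQsym, Matrix.mulVec_mulVec, hQQ]
  have dpp : ∀ (u : Fin d → ℝ), (P.mulVec u) ⬝ᵥ (P.mulVec u) = u ⬝ᵥ P.mulVec u := by
    intro u
    rw [mulVec_dp, hPsym, Matrix.mulVec_mulVec, hPP]
  have dqp : ∀ (u : Fin d → ℝ), (Q.mulVec u) ⬝ᵥ (P.mulVec u) = u ⬝ᵥ (Q * P).mulVec u := by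
    intro u
    rw [mulVec_dp, hQsym, Matrix.mulVec_mulVec]
  have dq1 : ∀ (u : Fin d → ℝ), (Q.mulVec u) ⬝ᵥ u = u ⬝ᵥ Q.mulVec u := by
    intro u; rw [mulVec_dp, hQsym]
  have dp1 : ∀ (u : Fin d → ℝ), (P.mulVec u) ⬝ᵥ u = u ⬝ᵥ P.mulVec u := by
    intro u; rw [mulVec_dp, hPsym]
  -- squared norms
  have hq2 : ∀ i, evn (y i - Q.mulVec (y i)) ^ 2
      = y i ⬝ᵥ y i - y i ⬝ᵥ Q.mulVec (y i) := by
    intro i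
    rw [evn_sq', dotProduct_sub, sub_dotProduct, sub_dotProduct, dqq, dq1,
      dotProduct_comm (y i) (Q.mulVec (y i))]
    ring
  have hp2 : ∀ i, p i ^ 2 = y i ⬝ᵥ y i - y i ⬝ᵥ P.mulVec (y i) := by
    intro i
    rw [hp, evn_sq', dotProduct_sub, sub_dotProduct, sub_dotProduct, dpp, dp1,
      dotProduct_comm (y i) (P.mulVec (y i))]
    ring
  have hd2 : ∀ i, evn (Q.mulVec (y i) - P.mulVec (y i)) ^ 2
      = y i ⬝ᵥ Q.mulVec (y i) + y i ⬝ᵥ P.mulVec (y i) - 2 * (y i ⬝ᵥ (Q * P).mulVec (y i)) := by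
    intro i
    rw [evn_sq', dotProduct_sub, sub_dotProduct, sub_dotProduct, dqq, dpp, dqp,
      dotProduct_comm (P.mulVec (y i)) (Q.mulVec (y i)), dqp]
    ring
  -- the trace identity
  have htr : ∑ i, (p i)⁻¹ * (y i ⬝ᵥ P.mulVec (y i) - y i ⬝ᵥ (Q * P).mulVec (y i)) = 0 := by
    have hstep : ∑ i, (p i)⁻¹ * (y i ⬝ᵥ P.mulVec (y i) - y i ⬝ᵥ (Q * P).mulVec (y i))
        = ((P - Q * P) * C).trace := by
      rw [hC, Finset.mul_sum, trace_sum]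
      refine Finset.sum_congr rfl fun i _ => ?_
      rw [Matrix.mul_smul, trace_smul, trace_vv, smul_eq_mul, Matrix.sub_mulVec,
        dotProduct_sub]
    rw [hstep, Matrix.sub_mul, trace_sub]
    have h1 : (P * C).trace = SA.trace := by
      rw [hPdef, hSA, Matrix.mul_assoc, trace_mul_comm A (Aᵀ * C), Matrix.mul_assoc]
    have h2 : (Q * P * C).trace = SA.trace := by
      have e1 : Q * P * C = B * (Bᵀ * A * (Aᵀ * C)) := by
        rw [hQdef, hPdef]; simp only [Matrix.mul_assoc]
      have e2 : Bᵀ * A * (Aᵀ * C) * B = H⁻¹ * (SA * H) := by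
        rw [hBtA, Matrix.mul_assoc, hACB]
      rw [e1, trace_mul_comm B (Bᵀ * A * (Aᵀ * C)), e2, trace_mul_comm (H⁻¹) (SA * H),
        Matrix.mul_assoc, hH1, Matrix.mul_one]
    rw [h1, h2, sub_self]
  -- per-index inequality
  have key : ∀ i ∈ Finset.univ, evn (y i - Q.mulVec (y i)) - p i
      ≤ -(evn (Q.mulVec (y i) - P.mulVec (y i)) ^ 2 / (2 * p i))
        + (p i)⁻¹ * (y i ⬝ᵥ P.mulVec (y i) - y i ⬝ᵥ (Q * P).mulVec (y i)) := by
    intro i _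
    have hpi := hppos i
    have hqnn : 0 ≤ evn (y i - Q.mulVec (y i)) := Real.sqrt_nonneg _
    set q := evn (y i - Q.mulVec (y i)) with hqdef
    set Δ := evn (Q.mulVec (y i) - P.mulVec (y i)) with hΔdef
    have hrhs : -(Δ ^ 2 / (2 * p i))
        + (p i)⁻¹ * (y i ⬝ᵥ P.mulVec (y i) - y i ⬝ᵥ (Q * P).mulVec (y i))
        = (q ^ 2 - p i ^ 2) / (2 * p i) := by
      rw [hq2, hp2 i, hd2]
      field_simp
      ring
    rw [hrhs]
    have hfrac : (q ^ 2 - p i ^ 2) / (2 * p i) - (q - p i) = (q - p i) ^ 2 / (2 * p i) := by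
      field_simp
      ring
    have hnn : 0 ≤ (q - p i) ^ 2 / (2 * p i) :=
      div_nonneg (sq_nonneg _) (by linarith)
    linarith
  -- sum up
  have hsum := Finset.sum_le_sum key
  rw [Finset.sum_sub_distrib, Finset.sum_add_distrib] at hsum
  have e3 : ∑ i, -(evn (Q.mulVec (y i) - P.mulVec (y i)) ^ 2 / (2 * p i))
      = -∑ i, evn (Q.mulVec (y i) - P.mulVec (y i)) ^ 2 / (2 * p i) := by
    rw [← Finset.sum_neg_distrib]
  rw [e3, htr, add_zero] at hsum
  exact hsum
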